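/- A subgroup of Aff(F_q) of type (d, k) contains a subgroup of type (e, j) if and only if e divides d and j ≤ k, where a subgroup has type (d, k) when it is conjugate to V ⋊ Λ_d with V an F_p-subspace of T of dimension k (such a type requires m | k for m the least divisor of n with d | p^m − 1). -/

import Mathlib

variable {F : Type*} [Field F]

/-- The affine permutation `x ↦ a * x + b` of a field `F`. -/
def affinePerm (a : Fˣ) (b : F) : Equiv.Perm F :=
  (Equiv.mulLeft₀ (a : F) a.ne_zero).trans (Equiv.addRight b)

@[simp] lemma affinePerm_apply (a : Fˣ) (b x : F) : affinePerm a b x = a * x + b := rfl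

/-- The one-dimensional affine group over `F`, as a subgroup of the permutation group. -/
def Aff (F : Type*) [Field F] : Subgroup (Equiv.Perm F) where
  carrier := {g | ∃ (a : Fˣ) (b : F), g = affinePerm a b}
  one_mem' := ⟨1, 0, by ext x; simp⟩
  mul_mem' := by
    rintro f g ⟨a, b, rfl⟩ ⟨c, d, rfl⟩
    exact ⟨a * c, a * d + b, by ext x; simp [mul_add, mul_assoc, add_assoc]⟩
  inv_mem' := by
    rintro f ⟨a, b, rfl⟩
    refine ⟨a⁻¹, -(((a⁻¹ : Fˣ) : F) * b), inv_eq_iff_mul_eq_one.mpr ?_⟩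
    ext x
    simp [mul_add, mul_assoc]

/-- A subgroup of `Aff F` has *type `(d, k)`* when it is conjugate within `Aff F` to
`V ⋊ Λ_d` with `V` an additive subgroup of the translations of cardinality `p^k`
(an `F_p`-subspace of dimension `k`). -/
def IsType {F : Type*} [Field F] (p : ℕ) (H : Subgroup (Equiv.Perm F)) (d k : ℕ) : Prop :=
  ∃ g ∈ Aff F, ∃ V : AddSubgroup F, Nat.card V = p ^ k ∧
    (fun x => g * x * g⁻¹) '' (H : Set (Equiv.Perm F)) =
      {h : Equiv.Perm F | ∃ (a : Fˣ) (b : F), h = affinePerm a b ∧ a ^ d = 1 ∧ b ∈ V}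

section Helpers

lemma affinePerm_one : (1 : Equiv.Perm F) = affinePerm 1 0 := by
  ext x; simp

lemma affinePerm_mul (a c : Fˣ) (b d : F) :
    affinePerm a b * affinePerm c d = affinePerm (a * c) (↑a * d + b) := by
  ext x
  simp only [Equiv.Perm.mul_apply, affinePerm_apply, Units.val_mul]
  ring

lemma affinePerm_inj {a c : Fˣ} {b d : F} (h : affinePerm a b = affinePerm c d) :
    a = c ∧ b = d := by
  have h0 := congrArg (fun f : Equiv.Perm F => f 0) h
  have h1 := congrArg (fun f : Equiv.Perm F => f 1) h
  simp only [affinePerm_apply, mul_zero, zero_add, mul_one] at h0 h1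
  refine ⟨Units.ext ?_, h0⟩
  have := h1
  rw [h0] at this
  exact add_right_cancel this

lemma affinePerm_inv (a : Fˣ) (b : F) :
    (affinePerm a b)⁻¹ = affinePerm a⁻¹ (-(↑a⁻¹ * b)) := by
  apply inv_eq_of_mul_eq_one_right
  rw [affinePerm_mul, mul_inv_cancel]
  have : (↑a : F) * -(↑a⁻¹ * b) + b = 0 := by
    rw [mul_neg, ← mul_assoc, ← Units.val_mul, mul_inv_cancel, Units.val_one, one_mul,
      neg_add_cancel]
  rw [this, ← affinePerm_one]

lemma affinePerm_conj (c a : Fˣ) (t b : F) :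
    affinePerm c t * affinePerm a b * (affinePerm c t)⁻¹ =
      affinePerm a (↑c * b + t - ↑a * t) := by
  rw [affinePerm_inv, affinePerm_mul, affinePerm_mul]
  have hu : c * a * c⁻¹ = a := by rw [mul_comm c a, mul_inv_cancel_right]
  rw [hu]
  congr 1
  have hc : (↑(c * a) : F) * (↑c⁻¹ * t) = ↑a * t := by
    push_cast
    field_simp
  rw [mul_neg, hc]
  ring

lemma nat_dvd_of_pow_sub_one_dvd {p s : ℕ} (hp : 2 ≤ p) (hs : 0 < s) :
    ∀ m, p ^ s - 1 ∣ p ^ m - 1 → s ∣ m := by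
  intro m
  induction m using Nat.strong_induction_on with
  | _ m ih =>
    intro h
    rcases Nat.lt_or_ge m s with hms | hms
    · rcases Nat.eq_zero_or_pos m with rfl | hm0
      · exact dvd_zero s
      · exfalso
        have h1 : 0 < p ^ m - 1 := by
          have : 2 ≤ p ^ m := le_trans hp (Nat.le_self_pow hm0.ne' p)
          omega
        have h2 := Nat.le_of_dvd h1 h
        have h3 : p ^ m < p ^ s := Nat.pow_lt_pow_right (by omega) hms
        omega
    · have hms' : p ^ (m - s) * p ^ s = p ^ m := by rw [← pow_add]; congr 1; omega
      have hA : 1 ≤ p ^ (m - s) := Nat.one_le_pow _ _ (by omega)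
      have hB : 1 ≤ p ^ s := Nat.one_le_pow _ _ (by omega)
      have h2 : p ^ s - 1 ∣ p ^ m - p ^ (m - s) := by
        refine ⟨p ^ (m - s), ?_⟩
        rw [Nat.sub_mul, one_mul, ← pow_add]
        congr 2
        omega
      have key : p ^ s - 1 ∣ p ^ (m - s) - 1 := by
        have h3 : p ^ (m - s) - 1 = (p ^ m - 1) - (p ^ m - p ^ (m - s)) := by
          have : p ^ (m-s) ≤ p ^ m := Nat.pow_le_pow_right (by omega) (by omega)
          omega
        rw [h3]
        exact Nat.dvd_sub h h2
      rcases Nat.eq_zero_or_pos (m - s) with hz | hpos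
      · have : m = s := by omega
        exact this ▸ dvd_rfl
      · have := ih (m - s) (by omega) key
        have : s ∣ (m - s) + s := Nat.dvd_add this dvd_rfl
        rwa [Nat.sub_add_cancel hms] at this

end Helpers

theorem fwd (p n : ℕ) (hp : p.Prime) (hn : 0 < n)
    (F : Type*) [Field F] [Fintype F] (hF : Fintype.card F = p ^ n)
    (H : Subgroup (Equiv.Perm F)) (hH : H ≤ Aff F)
    (d k : ℕ) (hdk : IsType p H d k)
    (e j : ℕ) (he : e ∣ Fintype.card F - 1)
    (K : Subgroup (Equiv.Perm F)) (hKH : K ≤ H) (hK : IsType p K e j) :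
    e ∣ d ∧ j ≤ k := by
  obtain ⟨g, hg, V, hVcard, hHimg⟩ := hdk
  obtain ⟨g', hg', W, hWcard, hKimg⟩ := hK
  obtain ⟨c, t, hu⟩ := mul_mem hg (inv_mem hg')
  have key : ∀ (a : Fˣ) (b : F), a ^ e = 1 → b ∈ W →
      a ^ d = 1 ∧ ↑c * b + t - ↑a * t ∈ V := by
    intro a b hae hbW
    have hmem : affinePerm a b ∈
        {h : Equiv.Perm F | ∃ a b, h = affinePerm a b ∧ a ^ e = 1 ∧ b ∈ W} :=
      ⟨a, b, rfl, hae, hbW⟩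
    rw [← hKimg] at hmem
    obtain ⟨x, hxK, hx⟩ := hmem
    simp only at hx
    have hmem2 : g * x * g⁻¹ ∈ (fun x => g * x * g⁻¹) '' (H : Set (Equiv.Perm F)) :=
      ⟨x, hKH hxK, rfl⟩
    rw [hHimg] at hmem2
    obtain ⟨a₁, b₁, heq, ha₁, hb₁⟩ := hmem2
    have hgx : g * x * g⁻¹ = affinePerm c t * affinePerm a b * (affinePerm c t)⁻¹ := by
      rw [← hu, ← hx]
      group
    rw [affinePerm_conj, heq] at hgx
    obtain ⟨ha, hb⟩ := affinePerm_inj hgx.symm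
    exact ⟨ha ▸ ha₁, hb ▸ hb₁⟩
  constructor
  · obtain ⟨x₀, hx₀⟩ := IsCyclic.exists_ofOrder_eq_natCard (α := Fˣ)
    have hcard : Nat.card Fˣ = Fintype.card F - 1 := by
      rw [Nat.card_units, Nat.card_eq_fintype_card]
    have he' : e ∣ orderOf x₀ := by rw [hx₀, hcard]; exact he
    have hne : orderOf x₀ ≠ 0 := by
      rw [hx₀, hcard, hF]
      have := Nat.one_lt_pow hn.ne' hp.one_lt
      omega
    have hζ : orderOf (x₀ ^ (orderOf x₀ / e)) = e := orderOf_pow_orderOf_div (x := x₀) hne he'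
    have h1 := key (x₀ ^ (orderOf x₀ / e)) 0 (by have h0 := pow_orderOf_eq_one (x₀ ^ (orderOf x₀ / e)); rwa [hζ] at h0) W.zero_mem
    calc e = orderOf (x₀ ^ (orderOf x₀ / e)) := hζ.symm
    _ ∣ d := orderOf_dvd_of_pow_eq_one h1.1
  · have hinj : ∀ b ∈ W, ↑c * b ∈ V := by
      intro b hb
      have h2 := (key 1 b (one_pow e) hb).2
      simpa using h2
    have hmono : Nat.card W ≤ Nat.card V := by
      refine Nat.card_le_card_of_injective
        (fun w : W => (⟨↑c * ↑w, hinj _ w.2⟩ : V)) ?_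
      intro w1 w2 h12
      rw [Subtype.mk_eq_mk] at h12
      exact Subtype.ext (mul_left_cancel₀ (Units.ne_zero c) h12)
    rw [hWcard, hVcard] at hmono
    exact (Nat.pow_le_pow_iff_right hp.one_lt).mp hmono

set_option maxHeartbeats 1000000 in
theorem bwd (p n : ℕ) (hp : p.Prime) (hn : 0 < n)
    (F : Type*) [Field F] [Fintype F] (hF : Fintype.card F = p ^ n)
    (H : Subgroup (Equiv.Perm F))
    (d k : ℕ) (hdk : IsType p H d k)
    (e j : ℕ) (he : e ∣ Fintype.card F - 1)
    (m : ℕ) (hm1 : 0 < m) (hm3 : e ∣ p ^ m - 1)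
    (hmj : m ∣ j) (hed : e ∣ d) (hjk : j ≤ k) :
    ∃ K : Subgroup (Equiv.Perm F), K ≤ H ∧ IsType p K e j := by
  classical
  obtain ⟨g, hg, V, hVcard, hHimg⟩ := hdk
  have hp2 := hp.two_le
  have hq1 : 1 < Fintype.card F := by
    rw [hF]; exact Nat.one_lt_pow hn.ne' hp.one_lt
  have he0 : 0 < e := by
    rcases Nat.eq_zero_or_pos e with rfl | h
    · rw [Nat.zero_dvd] at he; omega
    · exact h
  haveI hfact : Fact p.Prime := ⟨hp⟩
  haveI hpF : CharP F p := by
    obtain ⟨r, hr⟩ := CharP.exists F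
    haveI := hr
    obtain ⟨n', hrp, hcard⟩ := FiniteField.card F r
    have h1 : p ∣ r ^ (n' : ℕ) := by rw [← hcard, hF]; exact dvd_pow_self p hn.ne'
    have hpr : p = r := (Nat.prime_dvd_prime_iff_eq hp hrp).mp (hp.dvd_of_dvd_pow h1)
    rwa [hpr]
  haveI : ExpChar F p := ExpChar.prime hp
  have hmemS : ∀ y : Equiv.Perm F,
      y ∈ {h : Equiv.Perm F | ∃ (a : Fˣ) (b : F), h = affinePerm a b ∧ a ^ d = 1 ∧ b ∈ V} ↔
        ∃ x ∈ H, g * x * g⁻¹ = y := by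
    intro y; rw [← hHimg]; exact Iff.rfl
  have hSmul : ∀ {x y : Equiv.Perm F},
      (∃ (a : Fˣ) (b : F), x = affinePerm a b ∧ a ^ d = 1 ∧ b ∈ V) →
      (∃ (a : Fˣ) (b : F), y = affinePerm a b ∧ a ^ d = 1 ∧ b ∈ V) →
      (∃ (a : Fˣ) (b : F), x * y = affinePerm a b ∧ a ^ d = 1 ∧ b ∈ V) := by
    intro x y hx hy
    rw [← Set.mem_setOf_eq (p := fun h => ∃ (a : Fˣ) (b : F), h = affinePerm a b ∧ a ^ d = 1 ∧ b ∈ V), hmemS] at hx hy ⊢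
    obtain ⟨x1, hx1, rfl⟩ := hx
    obtain ⟨y1, hy1, rfl⟩ := hy
    exact ⟨x1 * y1, mul_mem hx1 hy1, by group⟩
  have hSinv : ∀ {x : Equiv.Perm F},
      (∃ (a : Fˣ) (b : F), x = affinePerm a b ∧ a ^ d = 1 ∧ b ∈ V) →
      (∃ (a : Fˣ) (b : F), x⁻¹ = affinePerm a b ∧ a ^ d = 1 ∧ b ∈ V) := by
    intro x hx
    rw [← Set.mem_setOf_eq (p := fun h => ∃ (a : Fˣ) (b : F), h = affinePerm a b ∧ a ^ d = 1 ∧ b ∈ V), hmemS] at hx ⊢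
    obtain ⟨x1, hx1, rfl⟩ := hx
    exact ⟨x1⁻¹, inv_mem hx1, by group⟩
  have hed' : ∀ a : Fˣ, a ^ e = 1 → a ^ d = 1 := by
    intro a ha
    obtain ⟨t', rfl⟩ := hed
    rw [pow_mul, ha, one_pow]
  have hstabV : ∀ (a : Fˣ), a ^ e = 1 → ∀ b ∈ V, ↑a * b ∈ V := by
    intro a ha b hb
    have h1 : ∃ (a' : Fˣ) (b' : F), affinePerm a 0 = affinePerm a' b' ∧ a' ^ d = 1 ∧ b' ∈ V :=
      ⟨a, 0, rfl, hed' a ha, V.zero_mem⟩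
    have h2 : ∃ (a' : Fˣ) (b' : F), affinePerm 1 b = affinePerm a' b' ∧ a' ^ d = 1 ∧ b' ∈ V :=
      ⟨1, b, rfl, one_pow d, hb⟩
    have h3 := hSinv h1
    have h4 := hSmul (hSmul h1 h2) h3
    rw [affinePerm_conj] at h4
    obtain ⟨a₁, b₁, heq, _, hb₁⟩ := h4
    obtain ⟨h5, h6⟩ := affinePerm_inj heq
    rw [← h6] at hb₁
    simpa using hb₁
  -- the subring generated by the e-th roots of unity
  have hstabR : ∀ r ∈ Subring.closure {x : F | x ^ e = 1}, ∀ b ∈ V, r * b ∈ V := by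
    intro r hr
    induction hr using Subring.closure_induction with
    | mem x hx =>
      intro b hb
      have hxu : IsUnit x := by
        refine IsUnit.of_mul_eq_one (x ^ (e - 1)) ?_
        rw [← pow_succ', Nat.sub_add_cancel he0]
        exact hx
      obtain ⟨a, rfl⟩ := hxu
      have hae : a ^ e = 1 := by
        apply Units.ext
        push_cast
        exact hx
      exact hstabV a hae b hb
    | zero => intro b hb; rw [zero_mul]; exact V.zero_mem
    | one => intro b hb; rwa [one_mul]
    | add x y hx hy ihx ihy => intro b hb; rw [add_mul]; exact V.add_mem (ihx b hb) (ihy b hb)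
    | neg x hx ihx => intro b hb; rw [neg_mul]; exact V.neg_mem (ihx b hb)
    | mul x y hx hy ihx ihy => intro b hb; rw [mul_assoc]; exact ihx _ (ihy b hb)
  set R : Subring F := Subring.closure {x : F | x ^ e = 1} with hRdef
  letI : Field ↥R := (Finite.isField_of_domain ↥R).toField
  letI : Fintype ↥R := Fintype.ofFinite _
  haveI : Module.Finite ↥R F := Module.Finite.of_finite
  -- card R = p ^ s
  have hcardF : Fintype.card F = Fintype.card ↥R ^ Module.finrank ↥R F := Module.card_eq_pow_finrank
  have hfpos : 0 < Module.finrank ↥R F := Module.finrank_pos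
  have hdvd : Fintype.card ↥R ∣ p ^ n := by
    rw [← hF, hcardF]; exact dvd_pow_self _ hfpos.ne'
  obtain ⟨s, hsn, hcardR⟩ := (Nat.dvd_prime_pow hp).mp hdvd
  have h2R : 2 ≤ Fintype.card ↥R := Fintype.one_lt_card
  have hs0 : 0 < s := by
    rcases Nat.eq_zero_or_pos s with rfl | h
    · rw [pow_zero] at hcardR; omega
    · exact h
  -- every element of R is fixed by Frobenius^m
  have hfrobR : ∀ x ∈ R, x ^ p ^ m = x := by
    intro x hx
    induction hx using Subring.closure_induction with
    | mem y hy =>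
      have h1 : p ^ m - 1 + 1 = p ^ m := Nat.succ_pred_eq_of_pos (pow_pos hp.pos m)
      obtain ⟨t', ht'⟩ := hm3
      calc y ^ p ^ m = y ^ (p ^ m - 1) * y := by rw [← pow_succ, h1]
      _ = (y ^ e) ^ t' * y := by rw [← pow_mul, ← ht']
      _ = y := by rw [Set.mem_setOf_eq.mp hy, one_pow, one_mul]
    | zero => exact zero_pow (pow_pos hp.pos m).ne'
    | one => exact one_pow _
    | add x y _ _ ihx ihy => rw [add_pow_char_pow, ihx, ihy]
    | neg x _ ihx =>
      have h2 := map_neg (iterateFrobenius F p m) x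
      rw [iterateFrobenius_def, iterateFrobenius_def] at h2
      rw [h2, ihx]
    | mul x y _ _ ihx ihy => rw [mul_pow, ihx, ihy]
  -- p ^ s - 1 divides p ^ m - 1, so s ∣ m
  have hsm : s ∣ m := by
    obtain ⟨u, hu⟩ := IsCyclic.exists_ofOrder_eq_natCard (α := (↥R)ˣ)
    have hcardRu : Nat.card (↥R)ˣ = p ^ s - 1 := by
      rw [Nat.card_units, Nat.card_eq_fintype_card, hcardR]
    have hxfr : ((u : ↥R) : F) ^ p ^ m = ((u : ↥R) : F) := hfrobR _ (u : ↥R).2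
    have hne0 : ((u : ↥R) : F) ≠ 0 := by
      intro h0
      exact Units.ne_zero u (Subtype.ext h0)
    have hpow1 : ((u : ↥R) : F) ^ (p ^ m - 1) = 1 := by
      have h1 : p ^ m - 1 + 1 = p ^ m := Nat.succ_pred_eq_of_pos (pow_pos hp.pos m)
      apply mul_right_cancel₀ hne0
      rw [one_mul, ← pow_succ, h1, hxfr]
    have hupow : u ^ (p ^ m - 1) = 1 := by
      apply Units.ext
      apply Subtype.ext
      push_cast
      exact hpow1
    refine nat_dvd_of_pow_sub_one_dvd hp2 hs0 m ?_
    rw [← hcardRu, ← hu]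
    exact orderOf_dvd_of_pow_eq_one hupow
  -- V as an R-submodule of F
  let V' : Submodule ↥R F :=
    { carrier := ↑V
      add_mem' := fun ha hb => V.add_mem ha hb
      zero_mem' := V.zero_mem
      smul_mem' := fun c x hx => hstabR ↑c c.2 x hx }
  letI : Fintype ↥V' := Fintype.ofFinite _
  have hcardV' : Fintype.card ↥V' = p ^ k := by
    rw [← Nat.card_eq_fintype_card, ← hVcard]
    rfl
  have hVfin : Fintype.card ↥V' = Fintype.card ↥R ^ Module.finrank ↥R ↥V' := Module.card_eq_pow_finrank
  have hk : k = s * Module.finrank ↥R ↥V' :=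
    Nat.pow_right_injective hp2
      (by show p ^ k = p ^ (s * Module.finrank ↥R ↥V')
          rw [← hcardV', hVfin, hcardR, ← pow_mul])
  obtain ⟨jq, hjq⟩ : s ∣ j := hsm.trans hmj
  have hjq_le : jq ≤ Module.finrank ↥R ↥V' := by
    refine Nat.le_of_mul_le_mul_left ?_ hs0
    rw [← hjq, ← hk]
    exact hjk
  -- a subspace of V' of the right dimension
  let bV : Module.Basis (Fin (Module.finrank ↥R ↥V')) ↥R ↥V' := Module.finBasis ↥R ↥V'
  let ι : Fin jq → F := fun i => ((bV (Fin.castLE hjq_le i) : ↥V') : F)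
  let W' : Submodule ↥R F := Submodule.span ↥R (Set.range ι)
  have hWV : W' ≤ V' := Submodule.span_le.mpr (by rintro x ⟨i, rfl⟩; exact (bV _).2)
  have hli : LinearIndependent ↥R ι := by
    have h1 : LinearIndependent ↥R (fun i => bV (Fin.castLE hjq_le i)) :=
      bV.linearIndependent.comp _ (Fin.castLE_injective hjq_le)
    exact h1.map' V'.subtype (Submodule.ker_subtype V')
  have hrankW : Module.finrank ↥R ↥W' = jq := by
    rw [finrank_span_eq_card hli, Fintype.card_fin]
  letI : Fintype ↥W' := Fintype.ofFinite _
  have hcardW' : Fintype.card ↥W' = p ^ j := by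
    rw [Module.card_eq_pow_finrank (K := ↥R) (V := ↥W'), hrankW, hcardR, ← pow_mul, ← hjq]
  let W : AddSubgroup F := W'.toAddSubgroup
  have hWcard : Nat.card ↥W = p ^ j := by
    rw [← hcardW', ← Nat.card_eq_fintype_card]
    rfl
  have hWstab : ∀ (a : Fˣ), a ^ e = 1 → ∀ b ∈ W, ↑a * b ∈ W := by
    intro a ha b hb
    have haR : (↑a : F) ∈ R := by
      apply Subring.subset_closure
      have h1 := congrArg (Units.val) ha
      push_cast at h1
      exact h1
    exact W'.smul_mem (⟨↑a, haR⟩ : ↥R) hb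
  have hWsubV : ∀ b ∈ W, b ∈ V := fun b hb => hWV hb
  let SW : Subgroup (Equiv.Perm F) :=
    { carrier := {h | ∃ (a : Fˣ) (b : F), h = affinePerm a b ∧ a ^ e = 1 ∧ b ∈ W}
      one_mem' := ⟨1, 0, affinePerm_one, one_pow e, W.zero_mem⟩
      mul_mem' := by
        rintro f g' ⟨a, b, rfl, ha, hb⟩ ⟨a', b', rfl, ha', hb'⟩
        exact ⟨a * a', ↑a * b' + b, affinePerm_mul a a' b b',
          by rw [mul_pow, ha, ha', one_mul], W.add_mem (hWstab a ha b' hb') hb⟩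
      inv_mem' := by
        rintro f ⟨a, b, rfl, ha, hb⟩
        have hainv : a⁻¹ ^ e = 1 := by rw [inv_pow, ha, inv_one]
        exact ⟨a⁻¹, -(↑a⁻¹ * b), affinePerm_inv a b, hainv,
          W.neg_mem (hWstab a⁻¹ hainv b hb)⟩ }
  let K : Subgroup (Equiv.Perm F) := SW.comap (MulAut.conj g).toMonoidHom
  refine ⟨K, ?_, g, hg, W, hWcard, ?_⟩
  · intro x hx
    have hx' : g * x * g⁻¹ ∈ SW := hx
    have hxS : ∃ (a : Fˣ) (b : F), g * x * g⁻¹ = affinePerm a b ∧ a ^ d = 1 ∧ b ∈ V := by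
      obtain ⟨a, b, hab, ha, hb⟩ := hx'
      exact ⟨a, b, hab, hed' a ha, hWsubV b hb⟩
    rw [← Set.mem_setOf_eq (p := fun h => ∃ (a : Fˣ) (b : F), h = affinePerm a b ∧ a ^ d = 1 ∧ b ∈ V), hmemS] at hxS
    obtain ⟨x1, hx1, hgx⟩ := hxS
    have hx1x : x1 = x := by
      have h1 := mul_right_cancel hgx
      exact mul_left_cancel h1
    rwa [← hx1x]
  · show (fun x => g * x * g⁻¹) '' (K : Set (Equiv.Perm F)) = _
    have hKset : (K : Set (Equiv.Perm F)) = (fun x => g * x * g⁻¹) ⁻¹' (SW : Set (Equiv.Perm F)) := rfl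
    rw [hKset, Set.image_preimage_eq _ (fun y => ⟨g⁻¹ * y * g, by group⟩)]
    rfl

/-- A subgroup of `Aff F` of type `(d, k)` contains a subgroup of type `(e, j)` if and
only if `e ∣ d` and `j ≤ k` (for `(e, j)` an admissible type, i.e. `e ∣ q - 1` and
`m ∣ j` where `m` is the least positive divisor of `n` with `e ∣ p^m - 1`). -/
theorem subgroup_of_type_iff (p n : ℕ) (hp : p.Prime) (hn : 0 < n)
    (F : Type*) [Field F] [Fintype F] (hF : Fintype.card F = p ^ n)
    (H : Subgroup (Equiv.Perm F)) (hH : H ≤ Aff F)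
    (d k : ℕ) (hdk : IsType p H d k)
    (e j : ℕ) (he : e ∣ Fintype.card F - 1) (hj : j ≤ n)
    (m : ℕ) (hm : 0 < m ∧ m ∣ n ∧ e ∣ p ^ m - 1 ∧
      ∀ m', 0 < m' → m' ∣ n → e ∣ p ^ m' - 1 → m ≤ m')
    (hmj : m ∣ j) :
    (∃ K : Subgroup (Equiv.Perm F), K ≤ H ∧ IsType p K e j) ↔ e ∣ d ∧ j ≤ k := by
  obtain ⟨hm1, hm2, hm3, hm4⟩ := hm
  constructor
  · rintro ⟨K, hKH, hK⟩
    exact fwd p n hp hn F hF H hH d k hdk e j he K hKH hK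
  · rintro ⟨hed, hjk⟩
    exact bwd p n hp hn F hF H d k hdk e j he m hm1 hm3 hmj hed hjk
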